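/- Let H be self-adjoint on a Hilbert space and suppose a functional calculus Φ : C₀(ℝ) → B(H) satisfies: Φ is an algebra homomorphism, Φ(conj f) = Φ(f)*, ‖Φ(f)‖ ≤ ‖f‖_∞, and Φ((z−·)⁻¹) = (z−H)⁻¹ for all z ∉ ℝ. If λ ∈ ℂ is not in the closure of f(σ(H)) for some f ∈ C₀(ℝ), then λ ∉ σ(Φ(f)). -/

import Mathlib

open Set ZeroAtInfty Complex

namespace Stmt11Aux

noncomputable def r' : ℝ → ℂ := fun x => (I - x)⁻¹

noncomputable def sph : Set ℂ := Metric.sphere (-(I/2)) 2⁻¹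

lemma zero_mem_sph : (0:ℂ) ∈ sph := by
  show dist (0:ℂ) (-(I/2)) = 2⁻¹
  simp [Complex.dist_eq]

noncomputable instance : Zero sph := ⟨⟨0, zero_mem_sph⟩⟩

lemma sph_coe : ((0 : sph) : ℂ) = 0 := rfl

instance : Fact ((0:ℂ) ∈ sph) := ⟨zero_mem_sph⟩

instance : CompactSpace sph := by unfold sph; infer_instance

lemma mem_sph_iff {z : ℂ} : z ∈ sph ↔ Complex.normSq z + z.im = 0 := by
  have h : z ∈ sph ↔ dist z (-(I/2)) = 2⁻¹ := Iff.rfl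
  rw [h, Complex.dist_eq]
  rw [show z - -(I/2) = z + I/2 by ring]
  constructor
  · intro h
    have h2 : Complex.normSq (z + I/2) = (2⁻¹ : ℝ)^2 := by
      rw [← Complex.sq_norm, h]
    have := h2
    simp [Complex.normSq_apply, Complex.add_re, Complex.add_im] at this
    simp [Complex.normSq_apply]
    nlinarith
  · intro h
    have h2 : Complex.normSq (z + I/2) = (2⁻¹ : ℝ)^2 := by
      simp [Complex.normSq_apply, Complex.add_re, Complex.add_im]
      simp [Complex.normSq_apply] at h
      nlinarith
    rw [← Complex.sq_norm] at h2
    nlinarith [norm_nonneg (z + I/2)]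

lemma I_sub_ne (x : ℝ) : (I - (x:ℂ)) ≠ 0 := by
  intro h
  have := congrArg Complex.im h
  simp at this

lemma r'_ne_zero (x : ℝ) : r' x ≠ 0 := inv_ne_zero (I_sub_ne x)

lemma normSq_I_sub (x : ℝ) : Complex.normSq (I - x) = x^2 + 1 := by
  simp [Complex.normSq_apply, Complex.sub_re, Complex.sub_im]
  ring

lemma r'_mem (x : ℝ) : r' x ∈ sph := by
  rw [mem_sph_iff, r']
  rw [Complex.normSq_inv, Complex.inv_im, normSq_I_sub]
  have h1 : (I - (x:ℂ)).im = 1 := by simp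
  rw [h1]
  have : x^2 + 1 > 0 := by positivity
  field_simp
  ring

lemma sph_inv_im {z : ℂ} (hz : z ∈ sph) (h0 : z ≠ 0) : (z⁻¹).im = 1 := by
  rw [mem_sph_iff] at hz
  have hns : Complex.normSq z ≠ 0 := by simpa using Complex.normSq_pos.mpr h0 |>.ne'
  rw [Complex.inv_im]
  have : z.im = -Complex.normSq z := by linarith
  rw [this]
  field_simp

lemma sph_real_part {z : ℂ} (hz : z ∈ sph) (h0 : z ≠ 0) :
    (I - z⁻¹ : ℂ) = ((I - z⁻¹).re : ℂ) := by
  have him : (I - z⁻¹).im = 0 := by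
    simp [Complex.sub_im, sph_inv_im hz h0]
  exact Complex.ext (by simp) (by simp [him])

lemma sph_r'_inv {z : ℂ} (hz : z ∈ sph) (h0 : z ≠ 0) : r' ((I - z⁻¹).re) = z := by
  rw [r', ← sph_real_part hz h0]
  rw [show I - (I - z⁻¹) = z⁻¹ by ring, inv_inv]

end Stmt11Aux


open Stmt11Aux Filter Bornology ContinuousMapZero

theorem stmt11 {H : Type*} [NormedAddCommGroup H] [InnerProductSpace ℂ H]
    [CompleteSpace H]
    (A : H →L[ℂ] H) (hA : IsSelfAdjoint A)
    (Φ : C₀(ℝ, ℂ) → (H →L[ℂ] H))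
    (hadd : ∀ f g, Φ (f + g) = Φ f + Φ g)
    (hsmul : ∀ (c : ℂ) f, Φ (c • f) = c • Φ f)
    (hmul : ∀ f g, Φ (f * g) = Φ f * Φ g)
    (hstar : ∀ f, Φ (star f) = star (Φ f))
    (hnorm : ∀ f, ‖Φ f‖ ≤ ‖f‖)
    (hres : ∀ (g : C₀(ℝ, ℂ)) (z : ℂ), z.im ≠ 0 →
      (∀ x : ℝ, g x = (z - x)⁻¹) →
      Φ g * (z • (1 : H →L[ℂ] H) - A) = 1 ∧ (z • (1 : H →L[ℂ] H) - A) * Φ g = 1)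
    (f : C₀(ℝ, ℂ)) (l : ℂ)
    (hl : l ∉ closure (f '' {x : ℝ | (x : ℂ) ∈ spectrum ℂ A})) :
    l ∉ spectrum ℂ (Φ f) := by
  classical
  rcases subsingleton_or_nontrivial H with hS | hN
  · rw [spectrum.mem_iff, not_not]
    exact isUnit_of_subsingleton _
  haveI : IsStarNormal A := hA.isStarNormal
  -- the functional calculus model
  set Ψ : C₀(ℝ, ℂ) → (H →L[ℂ] H) := fun h => cfc (fun w : ℂ => h w.re) A with hΨdef
  have hFc : ∀ (h : C₀(ℝ, ℂ)), Continuous (fun w : ℂ => h w.re) :=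
    fun h => h.continuous.comp Complex.continuous_re
  -- continuity of r' and its decay
  have hr'cont : Continuous r' := by
    apply Continuous.inv₀
    · exact continuous_const.sub Complex.continuous_ofReal
    · exact fun x => I_sub_ne x
  have hr'tendsto : Tendsto r' (cocompact ℝ) (nhds 0) := by
    have h1 : Tendsto (fun x : ℝ => I - (x : ℂ)) (cocompact ℝ) (cobounded ℂ) := by
      rw [← tendsto_norm_atTop_iff_cobounded]
      apply tendsto_atTop_mono (f := fun x : ℝ => ‖x‖ + (-1))
      · intro x
        have h2 : ‖(x : ℂ)‖ - ‖I‖ ≤ ‖(x : ℂ) - I‖ := norm_sub_norm_le _ _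
        rw [norm_sub_rev] at h2
        simpa using h2
      · exact tendsto_atTop_add_const_right _ _ tendsto_norm_cocompact_atTop
    exact tendsto_inv₀_cobounded.comp h1
  -- the pullback map ι
  set ι : C(sph, ℂ)₀ → C₀(ℝ, ℂ) := fun g =>
    ZeroAtInftyContinuousMap.mk
      (ContinuousMap.mk (fun x => g ⟨r' x, r'_mem x⟩)
        (g.continuous.comp (hr'cont.subtype_mk r'_mem)))
      (by
        have key : Tendsto (fun x : ℝ => (⟨r' x, r'_mem x⟩ : sph)) (cocompact ℝ)
            (nhds (0 : sph)) := by
          rw [Topology.IsEmbedding.subtypeVal.tendsto_nhds_iff]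
          exact hr'tendsto
        have h2 := ((map_continuous g).tendsto (0 : sph)).comp key
        rwa [map_zero g] at h2) with hιdef
  have hιapp : ∀ (g : C(sph, ℂ)₀) (x : ℝ), ι g x = g ⟨r' x, r'_mem x⟩ := fun g x => rfl
  have hιadd : ∀ g₁ g₂, ι (g₁ + g₂) = ι g₁ + ι g₂ := by
    intro g₁ g₂; ext x; simp [hιapp]
  have hιmul : ∀ g₁ g₂, ι (g₁ * g₂) = ι g₁ * ι g₂ := by
    intro g₁ g₂; ext x; simp [hιapp]
  have hιsmul : ∀ (c : ℂ) g, ι (c • g) = c • ι g := by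
    intro c g; ext x; simp [hιapp]
  have hιstar : ∀ g, ι (star g) = star (ι g) := by
    intro g; ext x; simp [hιapp]
  have hιsub : ∀ g₁ g₂, ι (g₁ - g₂) = ι g₁ - ι g₂ := by
    intro g₁ g₂
    rw [sub_eq_add_neg, ← neg_one_smul ℂ g₂, hιadd, hιsmul, neg_one_smul ℂ (ι g₂),
      ← sub_eq_add_neg]
  have hιnorm : ∀ g, ‖ι g‖ ≤ ‖g‖ := by
    intro g
    rw [← ZeroAtInftyContinuousMap.norm_toBCF_eq_norm]
    refine (BoundedContinuousFunction.norm_le (norm_nonneg g)).mpr fun x => ?_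
    show ‖g ⟨r' x, r'_mem x⟩‖ ≤ ‖g‖
    rw [ContinuousMapZero.norm_def]
    exact ContinuousMap.norm_coe_le_norm _ _
  -- basic algebra for Φ
  have hΦzero : Φ 0 = 0 := by
    have := hsmul 0 0
    simpa using this
  have hΦsub : ∀ h₁ h₂, Φ (h₁ - h₂) = Φ h₁ - Φ h₂ := by
    intro h₁ h₂
    have h1 : h₁ - h₂ = h₁ + (-1 : ℂ) • h₂ := by ext x; simp; ring
    rw [h1, hadd, hsmul]
    simp [sub_eq_add_neg]
  -- basic algebra for Ψ
  have hΨzero : Ψ 0 = 0 := by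
    show cfc (fun w : ℂ => (0 : C₀(ℝ, ℂ)) w.re) A = 0
    have : (fun w : ℂ => (0 : C₀(ℝ, ℂ)) w.re) = (fun _ : ℂ => (0 : ℂ)) := by
      ext w; simp
    rw [this]
    exact cfc_const_zero ℂ A
  have hΨadd : ∀ h₁ h₂, Ψ (h₁ + h₂) = Ψ h₁ + Ψ h₂ := by
    intro h₁ h₂
    have : (fun w : ℂ => (h₁ + h₂) w.re) = (fun w : ℂ => h₁ w.re + h₂ w.re) := by
      ext w; simp
    show cfc (fun w : ℂ => (h₁ + h₂) w.re) A
      = cfc (fun w : ℂ => h₁ w.re) A + cfc (fun w : ℂ => h₂ w.re) A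
    rw [this, cfc_add A (fun w : ℂ => h₁ w.re) (fun w : ℂ => h₂ w.re)
      (hFc h₁).continuousOn (hFc h₂).continuousOn]
  have hΨmul : ∀ h₁ h₂, Ψ (h₁ * h₂) = Ψ h₁ * Ψ h₂ := by
    intro h₁ h₂
    have : (fun w : ℂ => (h₁ * h₂) w.re) = (fun w : ℂ => h₁ w.re * h₂ w.re) := by
      ext w; simp
    show cfc (fun w : ℂ => (h₁ * h₂) w.re) A
      = cfc (fun w : ℂ => h₁ w.re) A * cfc (fun w : ℂ => h₂ w.re) A
    rw [this, cfc_mul (fun w : ℂ => h₁ w.re) (fun w : ℂ => h₂ w.re) A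
      (hFc h₁).continuousOn (hFc h₂).continuousOn]
  have hΨsmul : ∀ (c : ℂ) h, Ψ (c • h) = c • Ψ h := by
    intro c h
    have : (fun w : ℂ => (c • h) w.re) = (fun w : ℂ => c • h w.re) := by
      ext w; simp
    show cfc (fun w : ℂ => (c • h) w.re) A = c • cfc (fun w : ℂ => h w.re) A
    rw [this, cfc_smul c _ A (hFc h).continuousOn]
  have hΨstar : ∀ h, Ψ (star h) = star (Ψ h) := by
    intro h
    have : (fun w : ℂ => (star h) w.re) = (fun w : ℂ => star (h w.re)) := by
      ext w; simp
    show cfc (fun w : ℂ => (star h) w.re) A = star (cfc (fun w : ℂ => h w.re) A)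
    rw [this, cfc_star _ A]
  have hΨsub : ∀ h₁ h₂, Ψ (h₁ - h₂) = Ψ h₁ - Ψ h₂ := by
    intro h₁ h₂
    have h1 : h₁ - h₂ = h₁ + (-1 : ℂ) • h₂ := by ext x; simp; ring
    rw [h1, hΨadd, hΨsmul]
    simp [sub_eq_add_neg]
  have hΨnorm : ∀ h, ‖Ψ h‖ ≤ ‖h‖ := by
    intro h
    refine norm_cfc_le (norm_nonneg h) fun w _ => ?_
    rw [← ZeroAtInftyContinuousMap.norm_toBCF_eq_norm]
    exact BoundedContinuousFunction.norm_coe_le_norm h.toBCF w.re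
  -- spectrum of A is real
  have hre : ∀ w ∈ spectrum ℂ A, ((w.re : ℂ)) = w := by
    intro w hw
    have := hA.spectrumRestricts.rightInvOn hw
    simpa using this
  -- agreement on the generator
  have hbase : Φ (ι (ContinuousMapZero.id sph)) = Ψ (ι (ContinuousMapZero.id sph)) := by
    set g₀ : C₀(ℝ, ℂ) := ι (ContinuousMapZero.id sph) with hg₀def
    have hg₀app : ∀ x : ℝ, g₀ x = (I - (x : ℂ))⁻¹ := fun x => rfl
    obtain ⟨hΦl, hΦr⟩ := hres g₀ I (by simp) (fun x => hg₀app x)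
    have hIA : I • (1 : H →L[ℂ] H) - A = cfc (fun w : ℂ => I - w) A := by
      rw [cfc_sub (fun _ : ℂ => I) (fun w : ℂ => w) A continuousOn_const
        (continuousOn_id (s := spectrum ℂ A))]
      rw [cfc_const I A, cfc_id' ℂ A, Algebra.algebraMap_eq_smul_one]
    have hmulone : ∀ w ∈ spectrum ℂ A, (fun w : ℂ => g₀ w.re) w * (I - w) = 1 := by
      intro w hw
      have hwre := hre w hw
      simp only [hg₀app]
      rw [← hwre]
      exact inv_mul_cancel₀ (I_sub_ne w.re)
    have honemul : ∀ w ∈ spectrum ℂ A, (I - w) * (fun w : ℂ => g₀ w.re) w = 1 := by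
      intro w hw
      rw [mul_comm]
      exact hmulone w hw
    have hΨl : Ψ g₀ * (I • (1 : H →L[ℂ] H) - A) = 1 := by
      show cfc (fun w : ℂ => g₀ w.re) A * (I • (1 : H →L[ℂ] H) - A) = 1
      rw [hIA]
      rw [← cfc_mul (fun w : ℂ => g₀ w.re) (fun w : ℂ => I - w) A
        (hFc g₀).continuousOn (continuousOn_const.sub continuousOn_id)]
      rw [cfc_congr (g := fun _ : ℂ => (1 : ℂ)) hmulone]
      exact cfc_one ℂ A
    have hΨr : (I • (1 : H →L[ℂ] H) - A) * Ψ g₀ = 1 := by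
      show (I • (1 : H →L[ℂ] H) - A) * cfc (fun w : ℂ => g₀ w.re) A = 1
      rw [hIA]
      rw [← cfc_mul (fun w : ℂ => I - w) (fun w : ℂ => g₀ w.re) A
        (continuousOn_const.sub continuousOn_id) (hFc g₀).continuousOn]
      rw [cfc_congr (g := fun _ : ℂ => (1 : ℂ)) honemul]
      exact cfc_one ℂ A
    calc Φ g₀ = Φ g₀ * ((I • (1 : H →L[ℂ] H) - A) * Ψ g₀) := by rw [hΨr, mul_one]
    _ = (Φ g₀ * (I • (1 : H →L[ℂ] H) - A)) * Ψ g₀ := by rw [mul_assoc]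
    _ = Ψ g₀ := by rw [hΦl, one_mul]
  -- agreement everywhere, by Stone-Weierstrass
  have hagree : ∀ g : C(sph, ℂ)₀, Φ (ι g) = Ψ (ι g) := by
    have hcontΦ : Continuous (fun g : C(sph, ℂ)₀ => Φ (ι g)) := by
      refine (LipschitzWith.of_dist_le_mul (K := 1) fun g₁ g₂ => ?_).continuous
      rw [dist_eq_norm, dist_eq_norm, ← hΦsub, ← hιsub]
      calc ‖Φ (ι (g₁ - g₂))‖ ≤ ‖ι (g₁ - g₂)‖ := hnorm _
      _ ≤ ‖g₁ - g₂‖ := hιnorm _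
      _ = 1 * ‖g₁ - g₂‖ := (one_mul _).symm
    have hcontΨ : Continuous (fun g : C(sph, ℂ)₀ => Ψ (ι g)) := by
      refine (LipschitzWith.of_dist_le_mul (K := 1) fun g₁ g₂ => ?_).continuous
      rw [dist_eq_norm, dist_eq_norm, ← hΨsub, ← hιsub]
      calc ‖Ψ (ι (g₁ - g₂))‖ ≤ ‖ι (g₁ - g₂)‖ := hΨnorm _
      _ ≤ ‖g₁ - g₂‖ := hιnorm _
      _ = 1 * ‖g₁ - g₂‖ := (one_mul _).symm
    intro g
    induction g using ContinuousMapZero.induction_on_of_compact with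
    | zero =>
      have h0 : ι 0 = 0 := by ext x; simp [hιapp]
      rw [h0, hΦzero, hΨzero]
    | id => exact hbase
    | star_id =>
      rw [hιstar, hstar, hΨstar, hbase]
    | add g₁ g₂ h₁ h₂ => rw [hιadd, hadd, hΨadd, h₁, h₂]
    | mul g₁ g₂ h₁ h₂ => rw [hιmul, hmul, hΨmul, h₁, h₂]
    | smul c g h => rw [hιsmul, hsmul, hΨsmul, h]
    | frequently g h => exact h.mem_of_closed (isClosed_eq hcontΦ hcontΨ)
  -- f is in the range of ι
  obtain ⟨g, hg⟩ : ∃ g : C(sph, ℂ)₀, ι g = f := by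
    set G : sph → ℂ := fun z => if (z : ℂ) = 0 then 0 else f ((I - (z : ℂ)⁻¹).re) with hG
    have hGcont : Continuous G := by
      rw [continuous_iff_continuousAt]
      intro z
      by_cases hz : (z : ℂ) = 0
      · have hGz : G z = 0 := by simp [hG, hz]
        rw [ContinuousAt, hGz, NormedAddCommGroup.tendsto_nhds_zero]
        intro ε hε
        have hf0 := zero_at_infty (f : C₀(ℝ, ℂ))
        rw [NormedAddCommGroup.tendsto_nhds_zero] at hf0
        obtain ⟨K, hK, hKs⟩ := Filter.mem_cocompact.mp (hf0 ε hε)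
        obtain ⟨M, hM0, hM⟩ := hK.isBounded.subset_closedBall_lt 0 0
        have hδpos : (0 : ℝ) < (M + 2)⁻¹ := by positivity
        have hmem : {w : sph | ‖(w : ℂ)‖ < (M + 2)⁻¹} ∈ nhds z := by
          refine IsOpen.mem_nhds ?_ ?_
          · exact isOpen_lt (continuous_subtype_val.norm) continuous_const
          · simpa [hz] using hδpos
        filter_upwards [hmem] with w hw
        by_cases hw0 : (w : ℂ) = 0
        · simpa [hG, hw0] using hε
        · rw [hG]
          simp only [if_neg hw0]
          apply hKs
          intro hτK
          have hτball : ‖(I - (w : ℂ)⁻¹).re‖ ≤ M := by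
            have := hM hτK
            simpa [Metric.mem_closedBall, Real.dist_eq] using this
          have h1 : ((((I - (w : ℂ)⁻¹).re : ℝ) : ℂ)) = I - (w : ℂ)⁻¹ :=
            (sph_real_part w.2 hw0).symm
          have h2 : ‖(w : ℂ)⁻¹‖ - ‖I‖ ≤ ‖I - (w : ℂ)⁻¹‖ := by
            have := norm_sub_norm_le ((w : ℂ)⁻¹) I
            rwa [norm_sub_rev] at this
          have h3 : ‖(w : ℂ)⁻¹‖ = ‖(w : ℂ)‖⁻¹ := norm_inv _
          have hwpos : 0 < ‖(w : ℂ)‖ := norm_pos_iff.mpr hw0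
          have h4 : M + 2 < ‖(w : ℂ)‖⁻¹ := by
            have hww : ‖(w : ℂ)‖ < (M + 2)⁻¹ := hw
            calc M + 2 = ((M + 2)⁻¹)⁻¹ := by rw [inv_inv]
            _ < ‖(w : ℂ)‖⁻¹ := by
              exact (inv_strictAnti₀ hwpos hww)
          have h5 : ‖((((I - (w : ℂ)⁻¹).re : ℝ) : ℂ))‖ = ‖(I - (w : ℂ)⁻¹).re‖ := by
            simp [Complex.norm_real]
          rw [h1] at h5
          have h6 : ‖I‖ = 1 := by simp
          linarith [h5, h2, h3 ▸ h4]
      · have hcont2 : ContinuousAt (fun w : sph => f ((I - (w : ℂ)⁻¹).re)) z := by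
          apply f.continuous.continuousAt.comp
          apply Complex.continuous_re.continuousAt.comp
          exact continuousAt_const.sub (continuous_subtype_val.continuousAt.inv₀ hz)
        apply hcont2.congr
        have hopen : IsOpen {w : sph | (w : ℂ) ≠ 0} :=
          isOpen_compl_singleton.preimage continuous_subtype_val
        filter_upwards [hopen.mem_nhds hz] with w hw
        simp [hG, hw]
    refine ⟨⟨⟨G, hGcont⟩, by simp [hG, sph_coe]⟩, ?_⟩
    ext x
    rw [hιapp]
    show G ⟨r' x, r'_mem x⟩ = f x
    rw [hG]
    simp only [if_neg (r'_ne_zero x)]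
    have : (I - (r' x)⁻¹) = ((x : ℝ) : ℂ) := by
      rw [r', inv_inv]; ring
    rw [this, Complex.ofReal_re]
  -- conclude
  have hkey : Φ f = Ψ f := by rw [← hg]; exact hagree g
  rw [hkey]
  intro hmemspec
  have hmem2 : l ∈ spectrum ℂ (cfc (fun w : ℂ => f w.re) A) := hmemspec
  rw [cfc_map_spectrum (fun w : ℂ => f w.re) A ‹IsStarNormal A› (hFc f).continuousOn] at hmem2
  obtain ⟨w, hw, hwl⟩ := hmem2
  apply hl
  apply subset_closure
  refine ⟨w.re, ?_, hwl⟩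
  rw [Set.mem_setOf_eq, hre w hw]
  exact hw
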